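/- Let M > 0, R ≥ 1/(2M), let P be a real m×n matrix, and let x ∈ ℝ^n with ‖Px‖_∞ ≤ R. Define z = z(x) ∈ ℝ^m by: z_i = −1/(2M) + R + (Px)_i if (Px)_i − 1/(2M) < −R; z_i = −R + (Px)_i + 1/(2M) if (Px)_i + 1/(2M) > R; and z_i = 0 otherwise. Then for every Δ ∈ ℝ^n with ‖PΔ − z‖_∞ ≤ 1/(2M), one has ‖PΔ‖_∞ ≤ 1/M and ‖Px − e^{−2}·PΔ‖_∞ ≤ R. -/
import Mathlib


/-- The shift vector z(x) of the residual problem. -/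
noncomputable def zShift (m n : ℕ) (P : Matrix (Fin m) (Fin n) ℝ)
    (M R : ℝ) (x : Fin n → ℝ) : Fin m → ℝ := fun i =>
  if (P.mulVec x) i - 1 / (2 * M) < -R then
    -(1 / (2 * M)) + R + (P.mulVec x) i
  else if R < (P.mulVec x) i + 1 / (2 * M) then
    -R + (P.mulVec x) i + 1 / (2 * M)
  else 0

/-- Feasible points for the box constraint of the residual problem satisfy
‖PΔ‖_∞ ≤ 1/M and ‖Px − e⁻²·PΔ‖_∞ ≤ R. -/
theorem residual_box_feasible
    (m n : ℕ) (M R : ℝ) (hM : 0 < M) (hR : 1 / (2 * M) ≤ R)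
    (P : Matrix (Fin m) (Fin n) ℝ) (x : Fin n → ℝ)
    (hx : ‖P.mulVec x‖ ≤ R) :
    ∀ Δ : Fin n → ℝ, ‖P.mulVec Δ - zShift m n P M R x‖ ≤ 1 / (2 * M) →
      ‖P.mulVec Δ‖ ≤ 1 / M ∧
      ‖P.mulVec x - Real.exp (-2) • P.mulVec Δ‖ ≤ R := by
  intro Δ hΔ
  have hM2 : 0 < 1 / (2 * M) := by positivity
  have hR0 : 0 ≤ R := le_trans hM2.le hR
  have hMM : 2 * (1 / (2 * M)) = 1 / M := by field_simp
  have hc0 : 0 < Real.exp (-2) := Real.exp_pos _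
  have hc1 : Real.exp (-2) ≤ 1 := by rw [← Real.exp_zero]; exact Real.exp_le_exp.mpr (by norm_num)
  have hy : ∀ i, |(P.mulVec x) i| ≤ R := fun i =>
    le_trans (norm_le_pi_norm (P.mulVec x) i) hx
  have hw : ∀ i, |(P.mulVec Δ) i - zShift m n P M R x i| ≤ 1 / (2 * M) := fun i =>
    le_trans (norm_le_pi_norm (P.mulVec Δ - zShift m n P M R x) i) hΔ
  have key : ∀ i, |(P.mulVec Δ) i| ≤ 1 / M ∧
      |(P.mulVec x) i - Real.exp (-2) * (P.mulVec Δ) i| ≤ R := by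
    intro i
    have h1 := hy i
    have h2 := hw i
    rw [abs_le] at h1 h2
    unfold zShift at h2
    set c := Real.exp (-2)
    set y := (P.mulVec x) i
    set w := (P.mulVec Δ) i
    split_ifs at h2 with hA hB
    · constructor
      · rw [abs_le]; constructor <;> nlinarith
      · rw [abs_le]
        constructor
        · nlinarith [mul_le_mul_of_nonneg_left hR hc0.le]
        · nlinarith
    · constructor
      · rw [abs_le]; constructor <;> nlinarith
      · rw [abs_le]
        constructor
        · nlinarith
        · nlinarith [mul_le_mul_of_nonneg_left hR hc0.le]
    · push_neg at hA hB
      constructor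
      · rw [abs_le]; constructor <;> nlinarith
      · rw [abs_le]
        constructor <;> nlinarith
  constructor
  · rw [pi_norm_le_iff_of_nonneg (by positivity)]
    intro i; exact (key i).1
  · rw [pi_norm_le_iff_of_nonneg hR0]
    intro i
    simpa using (key i).2
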